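/- Let σ_α(n) = Z_1 + ... + Z_n be a random walk with i.i.d. Sibuya(α) jumps (σ_α(0) = 0). Then for every t ∈ ℕ_0, the expected number of indices x ≥ 0 with σ_α(x) = t equals binom(α+t-1, t); equivalently, ∑_{x=0}^∞ P(σ_α(x) = t) = (-1)^t binom(-α, t). -/

import Mathlib

open MeasureTheory ProbabilityTheory

/-- Generalized binomial coefficient `binom(x, k) = x(x-1)⋯(x-k+1)/k!` for real `x`. -/
noncomputable def gbinom (x : ℝ) (k : ℕ) : ℝ :=
  (∏ i ∈ Finset.range k, (x - i)) / (Nat.factorial k)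

/-- Sibuya(α) probability mass function. -/
noncomputable def sibuya (α : ℝ) (k : ℕ) : ℝ :=
  if k = 0 then 0 else (-1 : ℝ) ^ (k - 1) * gbinom α k

lemma descPoch_prod (x : ℝ) (k : ℕ) :
    (descPochhammer ℝ k).eval x = ∏ i ∈ Finset.range k, (x - i) := by
  induction k with
  | zero => simp
  | succ n ih =>
    rw [descPochhammer_succ_right, Finset.prod_range_succ, ← ih]
    simp [Polynomial.eval_mul]

lemma gbinom_eq_choose (x : ℝ) (k : ℕ) : gbinom x k = Ring.choose x k := by
  have h2 : (descPochhammer ℤ k).smeval x = (descPochhammer ℝ k).eval x := by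
    rw [← Polynomial.aeval_eq_smeval, Polynomial.aeval_def, Polynomial.eval₂_eq_eval_map,
      descPochhammer_map]
  have h3 := Ring.descPochhammer_eq_factorial_smul_choose x k
  rw [gbinom, ← descPoch_prod, ← h2, h3]
  field_simp [nsmul_eq_mul]
  exact nsmul_eq_mul _ _

lemma gbinom_zero_left (t : ℕ) : gbinom 0 t = if t = 0 then 1 else 0 := by
  rcases Nat.eq_zero_or_pos t with h | h
  · simp [h, gbinom]
  · simp only [Nat.pos_iff_ne_zero.mp h, if_neg (Nat.pos_iff_ne_zero.mp h)]
    rw [gbinom]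
    rw [Finset.prod_eq_zero (Finset.mem_range.mpr h) (by norm_num)]
    simp

lemma gbinom_vandermonde (α : ℝ) (t : ℕ) :
    ∑ k ∈ Finset.range (t + 1), gbinom α k * gbinom (-α) (t - k)
      = if t = 0 then 1 else 0 := by
  have h := Ring.add_choose_eq (r := α) (s := -α) t (Commute.all _ _)
  rw [add_neg_cancel] at h
  rw [Finset.Nat.sum_antidiagonal_eq_sum_range_succ_mk] at h
  have : Ring.choose (0:ℝ) t = if t = 0 then 1 else 0 := by
    rw [← gbinom_eq_choose]; exact gbinom_zero_left t
  rw [this] at h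
  rw [h]
  exact Finset.sum_congr rfl fun k _ => by
    simp only [gbinom_eq_choose]

/-- `u t = (-1)^t gbinom (-α) t`. -/
noncomputable def uu (α : ℝ) (t : ℕ) : ℝ := (-1 : ℝ) ^ t * gbinom (-α) t

lemma uu_renewal (α : ℝ) (t : ℕ) :
    uu α t = (if t = 0 then 1 else 0)
      + ∑ k ∈ Finset.range (t + 1), sibuya α k * uu α (t - k) := by
  rcases Nat.eq_zero_or_pos t with h | h
  · subst h; simp [uu, sibuya, gbinom]
  have ht : t ≠ 0 := Nat.pos_iff_ne_zero.mp h
  have e1 : ∑ k ∈ Finset.range (t + 1), sibuya α k * uu α (t - k)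
      = (-1 : ℝ) ^ (t - 1) *
        ∑ m ∈ Finset.range t, gbinom α (m + 1) * gbinom (-α) (t - (m + 1)) := by
    rw [Finset.sum_range_succ' (fun k => sibuya α k * uu α (t - k)) t]
    rw [Finset.mul_sum]
    have : sibuya α 0 * uu α (t - 0) = 0 := by simp [sibuya]
    rw [this, add_zero]
    refine Finset.sum_congr rfl fun m hm => ?_
    have hm' : m < t := Finset.mem_range.mp hm
    have hpow : (-1 : ℝ) ^ m * (-1 : ℝ) ^ (t - (m + 1)) = (-1 : ℝ) ^ (t - 1) := by
      rw [← pow_add]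
      congr 1
      omega
    simp only [sibuya, uu, Nat.succ_ne_zero, if_neg, Nat.add_sub_cancel]
    simp only [if_false]
    rw [← hpow]
    ring
  have e2 : ∑ m ∈ Finset.range t, gbinom α (m + 1) * gbinom (-α) (t - (m + 1))
      = -gbinom (-α) t := by
    have hv := gbinom_vandermonde α t
    rw [if_neg ht] at hv
    rw [Finset.sum_range_succ' (fun k => gbinom α k * gbinom (-α) (t - k)) t] at hv
    have h0 : gbinom α 0 * gbinom (-α) (t - 0) = gbinom (-α) t := by
      simp [gbinom]
    rw [h0] at hv
    linarith
  rw [e1, e2, if_neg ht, zero_add, uu]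
  have : (-1 : ℝ) ^ t = (-1) ^ (t - 1) * (-1) := by
    rw [← pow_succ]
    congr 1
    omega
  rw [this]
  ring

noncomputable def pp (α : ℝ) : ℕ → ℕ → ℝ
  | 0, t => if t = 0 then 1 else 0
  | (x + 1), t => ∑ k ∈ Finset.range (t + 1), sibuya α k * pp α x (t - k)

lemma pp_eq_zero (α : ℝ) : ∀ x t : ℕ, t < x → pp α x t = 0 := by
  intro x
  induction x with
  | zero => intro t ht; omega
  | succ n ih =>
    intro t ht
    rw [pp]
    refine Finset.sum_eq_zero fun k hk => ?_
    rcases Nat.eq_zero_or_pos k with h | h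
    · simp [h, sibuya]
    · rw [ih (t - k) (by have := Finset.mem_range.mp hk; omega), mul_zero]

lemma U_eq_uu (α : ℝ) : ∀ t : ℕ, (∑ x ∈ Finset.range (t + 1), pp α x t) = uu α t := by
  intro t
  induction t using Nat.strong_induction_on with
  | _ t ih =>
    rw [uu_renewal]
    rw [Finset.sum_range_succ' (fun x => pp α x t) t]
    have h0 : pp α 0 t = if t = 0 then 1 else 0 := rfl
    rw [h0, add_comm]
    congr 1
    simp only [pp]
    rw [Finset.sum_comm]
    refine Finset.sum_congr rfl fun k hk => ?_
    rw [← Finset.mul_sum]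
    rcases Nat.eq_zero_or_pos k with h | h
    · simp [h, sibuya]
    · congr 1
      have hk' : k ≤ t := Nat.lt_succ_iff.mp (Finset.mem_range.mp hk)
      rw [← ih (t - k) (by omega)]
      rw [← Finset.sum_subset (Finset.range_subset_range.mpr (by omega : t - k + 1 ≤ t))]
      intro x _ hx
      exact pp_eq_zero α x (t - k) (by simp at hx ⊢; omega)

lemma gbinom_reflect (α : ℝ) (t : ℕ) :
    gbinom (α + t - 1) t = (-1 : ℝ) ^ t * gbinom (-α) t := by
  have h1 : ∏ i ∈ Finset.range t, (α + t - 1 - i) = ∏ i ∈ Finset.range t, (α + i) := by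
    rw [← Finset.prod_range_reflect (fun j => α + (j : ℝ)) t]
    refine Finset.prod_congr rfl fun j hj => ?_
    have hj' : j < t := Finset.mem_range.mp hj
    have : ((t - 1 - j : ℕ) : ℝ) = (t : ℝ) - 1 - j := by
      have : (t - 1 - j : ℕ) = t - (1 + j) := by omega
      rw [this, Nat.cast_sub (by omega)]
      push_cast
      ring
    rw [this]
    ring
  have h2 : ∏ i ∈ Finset.range t, (-α - i) = (-1 : ℝ) ^ t * ∏ i ∈ Finset.range t, (α + i) := by
    have : ∀ i : ℕ, -α - (i:ℝ) = (-1) * (α + i) := fun i => by ring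
    simp only [this]
    rw [Finset.prod_mul_distrib, Finset.prod_const, Finset.card_range]
  rw [gbinom, gbinom, h1, h2]
  rw [mul_div_assoc, ← mul_assoc, ← pow_add, ← two_mul, pow_mul]
  norm_num


/-- For the random walk `σ_α(n) = Z 1 + ⋯ + Z n` with i.i.d. Sibuya(α) jumps,
the expected number of indices `x` with `σ_α(x) = t` equals
`∑_{x=0}^∞ P(σ_α(x) = t) = (-1)^t binom(-α, t) = binom(α+t-1, t)` for every `t ∈ ℕ`. -/
theorem sibuya_walk_potential_measure
    {Ω : Type*} [MeasurableSpace Ω] (μ : Measure Ω) [IsProbabilityMeasure μ]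
    (α : ℝ) (hα : α ∈ Set.Ioo (0 : ℝ) 1)
    (Z : ℕ → Ω → ℕ) (hmeas : ∀ i, Measurable (Z i))
    (hindep : iIndepFun Z μ)
    (hlaw : ∀ i k, (μ {ω | Z i ω = k}).toReal = sibuya α k)
    (S : ℕ → Ω → ℕ) (hS : ∀ n ω, S n ω = ∑ j ∈ Finset.range n, Z j ω)
    (t : ℕ) :
    (∑' x : ℕ, (μ {ω | S x ω = t}).toReal) = (-1 : ℝ) ^ t * gbinom (-α) t ∧
    (∑' x : ℕ, (μ {ω | S x ω = t}).toReal) = gbinom (α + t - 1) t := by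
  have hSfun : ∀ x, S x = ∑ j ∈ Finset.range x, Z j := by
    intro x; funext ω; rw [hS, Finset.sum_apply]
  have hSmeas : ∀ x, Measurable (S x) := by
    intro x
    have : S x = fun ω => ∑ j ∈ Finset.range x, Z j ω := funext (hS x)
    rw [this]
    exact Finset.measurable_sum _ fun j _ => hmeas j
  -- the key recursive computation
  have hP : ∀ x u, (μ {ω | S x ω = u}).toReal = pp α x u := by
    intro x
    induction x with
    | zero =>
      intro u
      rcases Nat.eq_zero_or_pos u with h | h
      · have : {ω | S 0 ω = u} = Set.univ := by
          ext ω; simp [hS, h]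
        rw [this, h]
        simp [pp]
      · have : {ω | S 0 ω = u} = ∅ := by
          ext ω; simp [hS]; omega
        rw [this]
        simp [pp, Nat.pos_iff_ne_zero.mp h]
    | succ x ih =>
      intro u
      have hset : {ω | S (x + 1) ω = u}
          = ⋃ k ∈ Finset.range (u + 1), (S x ⁻¹' {u - k} ∩ Z x ⁻¹' {k}) := by
        ext ω
        simp only [Set.mem_setOf_eq, Set.mem_iUnion, Set.mem_inter_iff, Set.mem_preimage,
          Set.mem_singleton_iff, Finset.mem_range, exists_prop]
        constructor
        · intro h
          refine ⟨Z x ω, ?_, ?_, rfl⟩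
          · rw [hS, Finset.sum_range_succ, ← hS x] at h; omega
          · rw [hS, Finset.sum_range_succ, ← hS x] at h; omega
        · rintro ⟨k, hk, h1, h2⟩
          rw [hS, Finset.sum_range_succ, ← hS x, h1, h2]
          omega
      have hdisj : (Finset.range (u + 1) : Set ℕ).Pairwise
          (Function.onFun Disjoint fun k => S x ⁻¹' {u - k} ∩ Z x ⁻¹' {k}) := by
        intro a _ b _ hab
        refine Set.disjoint_left.mpr fun ω h1 h2 => hab ?_
        have e1 : Z x ω = a := h1.2
        have e2 : Z x ω = b := h2.2
        omega
      have hmeask : ∀ k ∈ Finset.range (u + 1),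
          MeasurableSet (S x ⁻¹' {u - k} ∩ Z x ⁻¹' {k}) := fun k _ =>
        ((hSmeas x) (measurableSet_singleton _)).inter ((hmeas x) (measurableSet_singleton _))
      rw [hset, measure_biUnion_finset hdisj hmeask]
      have hIF : IndepFun (S x) (Z x) μ := by
        rw [hSfun x]
        exact hindep.indepFun_finsetSum_of_notMem hmeas Finset.notMem_range_self
      have hterm : ∀ k ∈ Finset.range (u + 1),
          μ (S x ⁻¹' {u - k} ∩ Z x ⁻¹' {k})
            = μ (S x ⁻¹' {u - k}) * μ (Z x ⁻¹' {k}) := fun k _ =>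
        hIF.measure_inter_preimage_eq_mul _ _ (measurableSet_singleton _)
          (measurableSet_singleton _)
      rw [ENNReal.toReal_sum (fun k _ => measure_ne_top μ _)]
      rw [pp]
      refine Finset.sum_congr rfl fun k hk => ?_
      rw [hterm k hk, ENNReal.toReal_mul]
      have e1 : μ (S x ⁻¹' {u - k}) = μ {ω | S x ω = u - k} := rfl
      have e2 : μ (Z x ⁻¹' {k}) = μ {ω | Z x ω = k} := rfl
      rw [e1, e2, ih, hlaw]
      ring
  have hzero : ∀ x ∉ Finset.range (t + 1), (μ {ω | S x ω = t}).toReal = 0 := by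
    intro x hx
    rw [hP]
    exact pp_eq_zero α x t (by simpa [Nat.lt_succ_iff] using Finset.mem_range.not.mp hx)
  have hsum : (∑' x : ℕ, (μ {ω | S x ω = t}).toReal)
      = ∑ x ∈ Finset.range (t + 1), pp α x t := by
    rw [tsum_eq_sum hzero]
    exact Finset.sum_congr rfl fun x _ => hP x t
  have h1 : (∑' x : ℕ, (μ {ω | S x ω = t}).toReal) = (-1 : ℝ) ^ t * gbinom (-α) t := by
    rw [hsum, U_eq_uu, uu]
  exact ⟨h1, by rw [h1, gbinom_reflect]⟩
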